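/- For a symplectic matrix P = [[A,B],[C,D]] ∈ Sp(2k) and 0 < ε sufficiently small, the number of negative eigenvalues (counted with multiplicity) of the symmetric matrix M_ε(P) is at least dim ker B; consequently (1/2)·sgn M_ε(P) ≤ k − dim ker B, where sgn denotes the signature. -/

import Mathlib

open Matrix BigOperators

noncomputable section

/-- The standard symplectic matrix `J = [[0, -I],[I, 0]]`. -/
def Jmat (ι : Type*) [Fintype ι] [DecidableEq ι] : Matrix (ι ⊕ ι) (ι ⊕ ι) ℝ :=
  Matrix.fromBlocks 0 (-1) 1 0

/-- `M` is symplectic iff `Mᵀ J M = J`. -/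
def IsSymplectic {ι : Type*} [Fintype ι] [DecidableEq ι]
    (M : Matrix (ι ⊕ ι) (ι ⊕ ι) ℝ) : Prop :=
  Mᵀ * Jmat ι * M = Jmat ι

/-- The matrix `M_ε(P)`. -/
def Mmat {ι : Type*} [Fintype ι] [DecidableEq ι] (ε : ℝ)
    (P : Matrix (ι ⊕ ι) (ι ⊕ ι) ℝ) : Matrix (ι ⊕ ι) (ι ⊕ ι) ℝ :=
  Pᵀ * Matrix.fromBlocks (Real.sin (2*ε) • 1) (-(Real.cos (2*ε)) • 1)
      (-(Real.cos (2*ε)) • 1) (-(Real.sin (2*ε)) • 1) * P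
    + Matrix.fromBlocks (Real.sin (2*ε) • 1) (Real.cos (2*ε) • 1)
      (Real.cos (2*ε) • 1) (-(Real.sin (2*ε)) • 1)

/-- `N = diag(-I, I)`. -/
def Nmat (ι : Type*) [Fintype ι] [DecidableEq ι] : Matrix (ι ⊕ ι) (ι ⊕ ι) ℝ :=
  Matrix.fromBlocks (-1) 0 0 1

/-- `m⁺(F)`: dimension of a maximal subspace on which the quadratic form of `F`
is positive definite. -/
def posDim {ι : Type*} [Fintype ι] (F : Matrix ι ι ℝ) : ℕ :=
  sSup {d : ℕ | ∃ W : Submodule ℝ (ι → ℝ), Module.finrank ℝ W = d ∧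
    ∀ v ∈ W, v ≠ 0 → 0 < F.mulVec v ⬝ᵥ v}

/-- `m⁻(F)`: dimension of a maximal subspace on which the quadratic form of `F`
is negative definite. -/
def negDim {ι : Type*} [Fintype ι] (F : Matrix ι ι ℝ) : ℕ :=
  sSup {d : ℕ | ∃ W : Submodule ℝ (ι → ℝ), Module.finrank ℝ W = d ∧
    ∀ v ∈ W, v ≠ 0 → F.mulVec v ⬝ᵥ v < 0}

/-- The signature `sgn F = m⁺(F) - m⁻(F)`. -/
def signat {ι : Type*} [Fintype ι] (F : Matrix ι ι ℝ) : ℤ :=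
  (posDim F : ℤ) - (negDim F : ℤ)

/-- The `⋄`-product (symplectic direct sum) of two matrices. -/
def diamond {ι₁ ι₂ : Type*}
    (M₁ : Matrix (ι₁ ⊕ ι₁) (ι₁ ⊕ ι₁) ℝ) (M₂ : Matrix (ι₂ ⊕ ι₂) (ι₂ ⊕ ι₂) ℝ) :
    Matrix ((ι₁ ⊕ ι₂) ⊕ (ι₁ ⊕ ι₂)) ((ι₁ ⊕ ι₂) ⊕ (ι₁ ⊕ ι₂)) ℝ :=
  Matrix.fromBlocks
    (Matrix.fromBlocks (M₁.submatrix Sum.inl Sum.inl) 0 0 (M₂.submatrix Sum.inl Sum.inl))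
    (Matrix.fromBlocks (M₁.submatrix Sum.inl Sum.inr) 0 0 (M₂.submatrix Sum.inl Sum.inr))
    (Matrix.fromBlocks (M₁.submatrix Sum.inr Sum.inl) 0 0 (M₂.submatrix Sum.inr Sum.inl))
    (Matrix.fromBlocks (M₁.submatrix Sum.inr Sum.inr) 0 0 (M₂.submatrix Sum.inr Sum.inr))

end


open Matrix

section Aux

variable {ι : Type*} [Fintype ι]

lemma bddAbove_dimSet (p : (ι → ℝ) → Prop) :
    BddAbove {d : ℕ | ∃ W : Submodule ℝ (ι → ℝ), Module.finrank ℝ W = d ∧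
      ∀ v ∈ W, v ≠ 0 → p v} := by
  refine ⟨Module.finrank ℝ (ι → ℝ), ?_⟩
  rintro d ⟨W, rfl, -⟩
  exact Submodule.finrank_le W

omit [Fintype ι] in
lemma nonempty_dimSet (p : (ι → ℝ) → Prop) :
    ({d : ℕ | ∃ W : Submodule ℝ (ι → ℝ), Module.finrank ℝ W = d ∧
      ∀ v ∈ W, v ≠ 0 → p v}).Nonempty := by
  refine ⟨0, ⊥, finrank_bot ℝ _, ?_⟩
  intro v hv hv0
  exact absurd (Submodule.mem_bot ℝ |>.mp hv) hv0

lemma le_negDim (F : Matrix ι ι ℝ) (W : Submodule ℝ (ι → ℝ))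
    (hW : ∀ v ∈ W, v ≠ 0 → F.mulVec v ⬝ᵥ v < 0) :
    Module.finrank ℝ W ≤ negDim F :=
  le_csSup (bddAbove_dimSet _) ⟨W, rfl, hW⟩

lemma posDim_add_negDim_le (F : Matrix ι ι ℝ) :
    posDim F + negDim F ≤ Fintype.card ι := by
  have hp := Nat.sSup_mem (nonempty_dimSet (fun v => 0 < F.mulVec v ⬝ᵥ v))
    (bddAbove_dimSet _)
  have hn := Nat.sSup_mem (nonempty_dimSet (fun v => F.mulVec v ⬝ᵥ v < 0))
    (bddAbove_dimSet _)
  obtain ⟨Wp, hWp, hWp'⟩ := hp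
  obtain ⟨Wn, hWn, hWn'⟩ := hn
  have hdisj : Disjoint Wp Wn := by
    rw [Submodule.disjoint_def]
    intro v hvp hvn
    by_contra hv0
    exact absurd (hWp' v hvp hv0) (not_lt.mpr (hWn' v hvn hv0).le)
  have := Submodule.finrank_sup_add_finrank_inf_eq Wp Wn
  rw [hdisj.eq_bot, finrank_bot, add_zero] at this
  calc posDim F + negDim F = Module.finrank ℝ ↥(Wp ⊔ Wn) := by
        rw [posDim, negDim, ← hWp, ← hWn, this]
    _ ≤ Module.finrank ℝ (ι → ℝ) := Submodule.finrank_le _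
    _ = Fintype.card ι := Module.finrank_fintype_fun_eq_card ℝ

end Aux

lemma quad_eval {k : ℕ} (A B C D : Matrix (Fin k) (Fin k) ℝ) (ε : ℝ)
    (y : Fin k → ℝ) (hy : B *ᵥ y = 0) :
    (Mmat ε (Matrix.fromBlocks A B C D)) *ᵥ (Sum.elim (0 : Fin k → ℝ) y) ⬝ᵥ (Sum.elim (0 : Fin k → ℝ) y)
      = -(Real.sin (2*ε)) * ((D *ᵥ y) ⬝ᵥ (D *ᵥ y) + y ⬝ᵥ y) := by
  set s := Real.sin (2*ε)
  set c := Real.cos (2*ε)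
  set P : Matrix (Fin k ⊕ Fin k) (Fin k ⊕ Fin k) ℝ := Matrix.fromBlocks A B C D with hP
  set S' : Matrix (Fin k ⊕ Fin k) (Fin k ⊕ Fin k) ℝ :=
    Matrix.fromBlocks (s • 1) (-c • 1) (-c • 1) (-s • 1) with hS'
  set S : Matrix (Fin k ⊕ Fin k) (Fin k ⊕ Fin k) ℝ :=
    Matrix.fromBlocks (s • 1) (c • 1) (c • 1) (-s • 1) with hS
  set v : Fin k ⊕ Fin k → ℝ := Sum.elim (0 : Fin k → ℝ) y with hv
  have hPv : P *ᵥ v = Sum.elim (0 : Fin k → ℝ) (D *ᵥ y) := by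
    rw [hP, hv, fromBlocks_mulVec]
    simp [hy]
  have key : Mmat ε P *ᵥ v ⬝ᵥ v = (S' *ᵥ (P *ᵥ v)) ⬝ᵥ (P *ᵥ v) + (S *ᵥ v) ⬝ᵥ v := by
    rw [Mmat, add_mulVec, add_dotProduct, ← mulVec_mulVec, ← mulVec_mulVec]
    congr 1
    rw [dotProduct_comm, dotProduct_mulVec, vecMul_transpose, dotProduct_comm]
  rw [key, hPv, hS', hS, hv, fromBlocks_mulVec, fromBlocks_mulVec]
  simp [smul_mulVec, sumElim_dotProduct_sumElim, smul_dotProduct, neg_mulVec,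
    neg_dotProduct, one_mulVec]
  ring

/-- For `0 < ε` small, `m⁻(M_ε(P)) ≥ dim ker B`, hence
`(1/2) sgn M_ε(P) ≤ k - dim ker B`. -/
theorem neg_index_ge_dim_kerB {k : ℕ} (A B C D : Matrix (Fin k) (Fin k) ℝ)
    (h : IsSymplectic (Matrix.fromBlocks A B C D)) :
    ∃ ε₀ > 0, ∀ ε : ℝ, 0 < ε → ε < ε₀ →
      Module.finrank ℝ (LinearMap.ker B.mulVecLin) ≤
        negDim (Mmat ε (Matrix.fromBlocks A B C D)) ∧
      signat (Mmat ε (Matrix.fromBlocks A B C D)) ≤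
        2 * ((k : ℤ) - Module.finrank ℝ (LinearMap.ker B.mulVecLin)) := by
  refine ⟨Real.pi / 4, by positivity, fun ε hε hε' => ?_⟩
  have hspos : 0 < Real.sin (2 * ε) :=
    Real.sin_pos_of_pos_of_lt_pi (by linarith) (by nlinarith [Real.pi_gt_three])
  -- the embedding y ↦ Sum.elim 0 y
  let f : (Fin k → ℝ) →ₗ[ℝ] ((Fin k ⊕ Fin k) → ℝ) :=
    { toFun := fun y => Sum.elim 0 y
      map_add' := fun x y => by funext i; cases i <;> simp
      map_smul' := fun r y => by funext i; cases i <;> simp }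
  have hf : Function.Injective f := by
    intro x y hxy
    funext i
    exact congrFun hxy (Sum.inr i)
  set K := LinearMap.ker B.mulVecLin with hK
  let W : Submodule ℝ ((Fin k ⊕ Fin k) → ℝ) := K.map f
  have hWrank : Module.finrank ℝ W = Module.finrank ℝ K :=
    ((Submodule.equivMapOfInjective f hf K).finrank_eq).symm
  have hWneg : ∀ v ∈ W, v ≠ 0 →
      (Mmat ε (Matrix.fromBlocks A B C D)) *ᵥ v ⬝ᵥ v < 0 := by
    rintro v ⟨y, hy, rfl⟩ hv0
    have hy' : B *ᵥ y = 0 := hy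
    have hy0 : y ≠ 0 := fun h0 => hv0 (by rw [h0]; exact map_zero f)
    have : (f y : (Fin k ⊕ Fin k) → ℝ) = Sum.elim (0 : Fin k → ℝ) y := rfl
    rw [this, quad_eval A B C D ε y hy']
    have h1 : 0 < y ⬝ᵥ y := by
      rcases lt_or_eq_of_le (Finset.sum_nonneg fun i _ => mul_self_nonneg (y i)) with h | h
      · exact h
      · exact absurd (dotProduct_self_eq_zero.mp h.symm) hy0
    have h2 : 0 ≤ (D *ᵥ y) ⬝ᵥ (D *ᵥ y) :=
      Finset.sum_nonneg fun i _ => mul_self_nonneg _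
    nlinarith
  have hmain : Module.finrank ℝ K ≤ negDim (Mmat ε (Matrix.fromBlocks A B C D)) := by
    rw [← hWrank]
    exact le_negDim _ W hWneg
  refine ⟨hmain, ?_⟩
  have hsum := posDim_add_negDim_le (Mmat ε (Matrix.fromBlocks A B C D))
  rw [Fintype.card_sum, Fintype.card_fin] at hsum
  rw [signat]
  omega
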